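/- Let J be a strongly stable Artinian monomial ideal in R = k[x_1,…,x_n]. Suppose that for each 2 ≤ i ≤ n−1 there exists an integer t_i such that f_{i+1}(α) = t_i − 2|α| + 1 for every α ∈ J_i. Then J is almost reverse lexicographic. (This is the monomial-ideal content of the paper's Corollary: if for each 0 ≤ s ≤ n−3 there exist generic linear forms L_1,…,L_s with I+(L_1,…,L_s) having the strong Stanley property, then gin(I) is almost reverse lexicographic.) -/
import Mathlib


/-
Combinatorial framework: a monomial ideal in `k[x_1,…,x_n]` is encoded by its set
of monomials, viewed as exponent vectors in `Fin n → ℕ` (with `x_1,…,x_n`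
corresponding to indices `0,…,n-1`).
-/

/-- A monomial ideal: a set of exponent vectors closed under multiplication by
arbitrary monomials. -/
def IsMonomialIdeal {n : ℕ} (S : Set (Fin n → ℕ)) : Prop :=
  ∀ m ∈ S, ∀ m' : Fin n → ℕ, m + m' ∈ S

/-- `R/J` is a finite-dimensional `k`-vector space iff the set of standard
monomials (the complement of the monomial set of `J`) is finite. -/
def IsArtinianMonomialSet {n : ℕ} (S : Set (Fin n → ℕ)) : Prop :=
  Sᶜ.Finite

/-- Strong stability: if `m ∈ J`, `x_j ∣ m` and `i < j`, then `x_i · m / x_j ∈ J`. -/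
def IsStronglyStable {n : ℕ} (S : Set (Fin n → ℕ)) : Prop :=
  ∀ m ∈ S, ∀ i j : Fin n, i < j → 0 < m j →
    (fun l => if l = i then m i + 1 else if l = j then m j - 1 else m l) ∈ S

/-- `x^a < x^b` in the reverse lexicographic order with `x_1 > ⋯ > x_n`
(used to compare monomials of the same degree): at the last index where the
exponents differ, `a` has the larger exponent. -/
def RevLexLT {n : ℕ} (a b : Fin n → ℕ) : Prop :=
  ∃ j : Fin n, b j < a j ∧ ∀ l : Fin n, j < l → a l = b l

/-- Total degree of a monomial. -/
def mdeg {n : ℕ} (m : Fin n → ℕ) : ℕ := ∑ l, m l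

/-- `m` is a minimal (monomial) generator of the monomial ideal `S`. -/
def IsMinGen {n : ℕ} (S : Set (Fin n → ℕ)) (m : Fin n → ℕ) : Prop :=
  m ∈ S ∧ ∀ m' ∈ S, (∀ l, m' l ≤ m l) → m' = m

/-- Almost reverse lexicographic: `S` contains every monomial that is greater in
reverse lexicographic order than some minimal generator of `S` of the same degree. -/
def AlmostRevLex {n : ℕ} (S : Set (Fin n → ℕ)) : Prop :=
  ∀ M N : Fin n → ℕ, IsMinGen S N → mdeg M = mdeg N → RevLexLT N M → M ∈ S

/-- The exponent vector of `x_1^{α 0} ⋯ x_i^{α (i-1)} · x_{i+1}^t`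
(0-based: positions `0,…,i-1` carry `α`, position `i` carries `t`). -/
def monVec (n i : ℕ) (α : ℕ → ℕ) (t : ℕ) : Fin n → ℕ :=
  fun l => if (l : ℕ) < i then α l else if (l : ℕ) = i then t else 0

/-- `fF S i α = min {t : x_1^{α 0}⋯x_i^{α (i-1)} · x_{i+1}^t ∈ S}`; this is the
paper's `f_{i+1}(α_1,…,α_i)` (0-based `i`, so `fF S 0 _` is the paper's `f_1`). -/
noncomputable def fF {n : ℕ} (S : Set (Fin n → ℕ)) (i : ℕ) (α : ℕ → ℕ) : ℕ :=
  sInf {t | monVec n i α t ∈ S}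

/-- The paper's set `J_i`: tuples `(α_1,…,α_i)` (recorded in positions
`0,…,i-1` and padded by zeros) with `α_1 < f_1` and
`α_j < f_j(α_1,…,α_{j-1})` for `2 ≤ j ≤ i`. -/
def JSet {n : ℕ} (S : Set (Fin n → ℕ)) (i : ℕ) : Set (ℕ → ℕ) :=
  {α | (∀ l, i ≤ l → α l = 0) ∧ ∀ j, j < i → α j < fF S j α}

/-- `|α| = α_1 + ⋯ + α_i`. -/
def asum (i : ℕ) (α : ℕ → ℕ) : ℕ := ∑ j ∈ Finset.range i, α j

/-- The tuple `(0,…,0,s)` of length `i`. -/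
def lastVec (i s : ℕ) : ℕ → ℕ := fun l => if l = i - 1 then s else 0

/-- Reverse lexicographic comparison of `i`-tuples: `x^a < x^b`. -/
def RevLexLT' (a b : ℕ → ℕ) : Prop :=
  ∃ j : ℕ, b j < a j ∧ ∀ l, j < l → a l = b l

def extv {n : ℕ} (m : Fin n → ℕ) : ℕ → ℕ :=
  fun l => if h : l < n then m ⟨l, h⟩ else 0

lemma monVec_congr {n i : ℕ} {α β : ℕ → ℕ} (h : ∀ l < i, α l = β l) (t : ℕ) :
    monVec n i α t = monVec n i β t := by
  funext l; unfold monVec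
  by_cases h1 : (l : ℕ) < i
  · simp [h1, h l h1]
  · simp [h1]

lemma fF_congr {n : ℕ} (S : Set (Fin n → ℕ)) {i : ℕ} {α β : ℕ → ℕ}
    (h : ∀ l < i, α l = β l) : fF S i α = fF S i β := by
  unfold fF
  congr 1
  ext t
  rw [Set.mem_setOf_eq, Set.mem_setOf_eq, monVec_congr h]

lemma fF_mem {n : ℕ} {S : Set (Fin n → ℕ)} (hArt : IsArtinianMonomialSet S)
    {i : ℕ} (hi : i < n) (α : ℕ → ℕ) : monVec n i α (fF S i α) ∈ S := by
  have hne : {t | monVec n i α t ∈ S}.Nonempty := by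
    by_contra h
    rw [Set.not_nonempty_iff_eq_empty] at h
    have hinj : Function.Injective (fun t => monVec n i α t) := by
      intro a b hab
      have := congrFun hab ⟨i, hi⟩
      simpa [monVec] using this
    have hsub : Set.range (fun t => monVec n i α t) ⊆ Sᶜ := by
      rintro _ ⟨t, rfl⟩ hs
      have : t ∈ {t | monVec n i α t ∈ S} := hs
      simp [h] at this
    exact (Set.infinite_range_of_injective hinj) (hArt.subset hsub)
  exact Nat.sInf_mem hne

lemma fF_upward {n : ℕ} {S : Set (Fin n → ℕ)} (hIdeal : IsMonomialIdeal S)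
    {i : ℕ} (α : ℕ → ℕ) {t t' : ℕ} (h : monVec n i α t ∈ S) (htt : t ≤ t') :
    monVec n i α t' ∈ S := by
  have h2 := hIdeal _ h (fun l => if (l:ℕ) = i then t' - t else 0)
  convert h2 using 1
  funext l
  show monVec n i α t' l = monVec n i α t l + _
  unfold monVec
  rcases lt_trichotomy (l:ℕ) i with h1|h1|h1
  · simp [h1, Nat.ne_of_lt h1]
  · simp [h1, lt_irrefl]; omega
  · simp only [if_neg (show ¬(l:ℕ) < i by omega), if_neg (show ¬(l:ℕ) = i by omega)]

lemma lt_fF_of_notMem {n : ℕ} {S : Set (Fin n → ℕ)} (hIdeal : IsMonomialIdeal S)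
    (hArt : IsArtinianMonomialSet S) {m : Fin n → ℕ} (hm : m ∉ S) (i : Fin n) :
    m i < fF S i (extv m) := by
  by_contra h
  push_neg at h
  have hmem : monVec n i (extv m) (m i) ∈ S :=
    fF_upward hIdeal _ (fF_mem hArt i.isLt _) h
  apply hm
  have h2 := hIdeal _ hmem (fun l => if (i:ℕ) < (l:ℕ) then m l else 0)
  convert h2 using 1
  funext l
  show m l = monVec n i (extv m) (m i) l + _
  unfold monVec extv
  rcases lt_trichotomy (l:ℕ) (i:ℕ) with h1|h1|h1
  · simp [h1, l.isLt, Nat.lt_asymm h1]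
  · have hl : l = i := Fin.ext h1
    subst hl
    simp
  · simp only [if_neg (show ¬(l:ℕ) < (i:ℕ) by omega), if_neg (show ¬(l:ℕ) = (i:ℕ) by omega),
      if_pos h1, zero_add]

lemma fF_le_of_mem {n : ℕ} {S : Set (Fin n → ℕ)} {m : Fin n → ℕ} (hm : m ∈ S) (i : Fin n)
    (hz : ∀ l : Fin n, (i:ℕ) < (l:ℕ) → m l = 0) : fF S (i:ℕ) (extv m) ≤ m i := by
  apply Nat.sInf_le
  show monVec n (i:ℕ) (extv m) (m i) ∈ S
  convert hm using 1
  funext l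
  unfold monVec extv
  rcases lt_trichotomy (l:ℕ) (i:ℕ) with h1|h1|h1
  · simp [h1, l.isLt]
  · have hl : l = i := Fin.ext h1
    subst hl; simp
  · simp only [if_neg (show ¬(l:ℕ) < (i:ℕ) by omega), if_neg (show ¬(l:ℕ) = (i:ℕ) by omega)]
    exact (hz l h1).symm

lemma mdeg_split {n k : ℕ} (hk : k < n) (m : Fin n → ℕ)
    (hz : ∀ l : Fin n, k < (l:ℕ) → m l = 0) :
    (∑ l, m l) = (∑ j ∈ Finset.range k, extv m j) + m ⟨k, hk⟩ := by
  have h1 : (∑ l, m l) = ∑ j ∈ Finset.range n, extv m j := by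
    rw [← Fin.sum_univ_eq_sum_range]
    apply Finset.sum_congr rfl
    intro l _
    simp [extv, l.isLt]
  rw [h1]
  have h2 : ∑ j ∈ Finset.range n, extv m j = ∑ j ∈ Finset.range (k+1), extv m j := by
    refine (Finset.sum_subset (Finset.range_subset_range.mpr hk) ?_).symm
    intro x _ hx2
    simp only [Finset.mem_range, not_lt] at hx2
    unfold extv
    split
    · refine hz _ ?_
      simp only [Fin.val_mk]; omega
    · rfl
  rw [h2, Finset.sum_range_succ]
  congr 1
  simp [extv, hk]

lemma trunc_mem_JSet {n : ℕ} {S : Set (Fin n → ℕ)} (hIdeal : IsMonomialIdeal S)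
    (hArt : IsArtinianMonomialSet S) {m : Fin n → ℕ} (hm : m ∉ S) (k : ℕ) (hk : k ≤ n) :
    (fun l => if l < k then extv m l else 0) ∈ JSet S k := by
  constructor
  · intro l hl
    simp only [if_neg (Nat.not_lt.mpr hl)]
  · intro j hj
    have hjn : j < n := lt_of_lt_of_le hj hk
    have h1 := lt_fF_of_notMem hIdeal hArt hm ⟨j, hjn⟩
    simp only [Fin.val_mk] at h1
    have h2 : fF S j (extv m) = fF S j (fun l => if l < k then extv m l else 0) :=
      fF_congr S (fun l hl => (if_pos (by omega : l < k)).symm)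
    rw [h2] at h1
    simp only [if_pos hj]
    have : extv m j = m ⟨j, hjn⟩ := dif_pos hjn
    rw [this]
    exact h1

lemma g_step {n : ℕ} {S : Set (Fin n → ℕ)} (hIdeal : IsMonomialIdeal S)
    (hArt : IsArtinianMonomialSet S) (hSS : IsStronglyStable S) (hn : 1 < n) (a : ℕ) :
    (fF S 1 (fun _ => a+1) ≤ fF S 1 (fun _ => a)) ∧
    (0 < fF S 1 (fun _ => a) → fF S 1 (fun _ => a+1) < fF S 1 (fun _ => a)) := by
  have h0n : 0 < n := by omega
  set t := fF S 1 (fun _ => a) with ht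
  have hmem : monVec n 1 (fun _ => a) t ∈ S := fF_mem hArt (by omega) _
  constructor
  · apply Nat.sInf_le
    show monVec n 1 (fun _ => a+1) t ∈ S
    have h2 := hIdeal _ hmem (fun l => if (l:ℕ) = 0 then 1 else 0)
    convert h2 using 1
    funext l
    show monVec n 1 _ t l = monVec n 1 _ t l + _
    unfold monVec
    rcases Nat.lt_trichotomy (l:ℕ) 1 with h1|h1|h1
    · simp only [if_pos h1, if_pos (show (l:ℕ) = 0 by omega)]
    · simp only [if_neg (show ¬(l:ℕ) < 1 by omega), if_pos h1,
        if_neg (show ¬(l:ℕ) = 0 by omega), add_zero]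
    · simp only [if_neg (show ¬(l:ℕ) < 1 by omega), if_neg (show ¬(l:ℕ) = 1 by omega),
        if_neg (show ¬(l:ℕ) = 0 by omega), add_zero]
  · intro hpos
    have hmj : monVec n 1 (fun _ => a) t ⟨1, hn⟩ = t := by
      simp [monVec]
    have h2 := hSS _ hmem ⟨0, h0n⟩ ⟨1, hn⟩ (by simp [Fin.lt_def]) (by rw [hmj]; exact hpos)
    have h3 : monVec n 1 (fun _ => a+1) (t-1) ∈ S := by
      convert h2 using 1
      funext l
      rcases Nat.lt_trichotomy (l:ℕ) 1 with h1|h1|h1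
      · have hl : l = ⟨0, h0n⟩ := Fin.ext (by simpa using (by omega : (l:ℕ) = 0))
        subst hl
        simp [monVec]
      · have hl : l = ⟨1, hn⟩ := Fin.ext (by simpa using h1)
        subst hl
        simp [monVec, hmj, Fin.ext_iff]
      · have hne0 : l ≠ ⟨0, h0n⟩ := by simp [Fin.ext_iff]; omega
        have hne1 : l ≠ ⟨1, hn⟩ := by simp [Fin.ext_iff]; omega
        simp only [if_neg hne0, if_neg hne1]
        unfold monVec
        simp only [if_neg (show ¬(l:ℕ) < 1 by omega), if_neg (show ¬(l:ℕ) = 1 by omega)]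
    have h4 : fF S 1 (fun _ => a+1) ≤ t - 1 := Nat.sInf_le h3
    omega

lemma g_iter {n : ℕ} {S : Set (Fin n → ℕ)} (hIdeal : IsMonomialIdeal S)
    (hArt : IsArtinianMonomialSet S) (hSS : IsStronglyStable S) (hn : 1 < n) (a c : ℕ) :
    fF S 1 (fun _ => a + c) + c ≤ fF S 1 (fun _ => a) ∨ fF S 1 (fun _ => a + c) = 0 := by
  induction c with
  | zero => left; simp
  | succ c ih =>
    have hs := g_step hIdeal hArt hSS hn (a+c)
    have heq : (fun _ : ℕ => a + (c+1)) = (fun _ : ℕ => (a+c)+1) := by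
      funext _; omega
    rw [heq]
    rcases ih with h|h
    · rcases Nat.eq_zero_or_pos (fF S 1 (fun _ => a+c)) with h0|h0
      · right; have := hs.1; omega
      · left; have := hs.2 h0; omega
    · right; have := hs.1; omega

/-- Corollary, monomial-ideal content.  Let `J` be a strongly
stable Artinian monomial ideal in `k[x_1,…,x_n]`.  If for each `2 ≤ i ≤ n-1`
there is an integer `t_i` with `f_{i+1}(α) = t_i - 2|α| + 1` for every
`α ∈ J_i` (the strong Stanley property of the successive generic linear
sections), then `J` is almost reverse lexicographic. -/
theorem almostRevLex_of_strong_stanley_sections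
    {n : ℕ} (S : Set (Fin n → ℕ))
    (hIdeal : IsMonomialIdeal S) (hArt : IsArtinianMonomialSet S)
    (hSS : IsStronglyStable S)
    (hSSP : ∀ i, 2 ≤ i → i ≤ n - 1 → ∃ t : ℤ,
      ∀ α ∈ JSet S i, (fF S i α : ℤ) = t - 2 * (asum i α : ℤ) + 1) :
    AlmostRevLex S := by
  classical
  intro M N hNmin hdeg hlt
  obtain ⟨j0, hj0lt, hj0tail⟩ := hlt
  by_contra hM
  -- K : the largest index with N K ≠ 0
  set Supp : Finset (Fin n) := Finset.univ.filter (fun l => N l ≠ 0) with hSupp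
  have hj0S : j0 ∈ Supp := by
    simp only [hSupp, Finset.mem_filter, Finset.mem_univ, true_and]
    omega
  have hSne : Supp.Nonempty := ⟨j0, hj0S⟩
  set K := Supp.max' hSne with hKdef
  have hKS : K ∈ Supp := Supp.max'_mem hSne
  have hNK0 : N K ≠ 0 := by
    simpa only [hSupp, Finset.mem_filter, Finset.mem_univ, true_and] using hKS
  have hKz : ∀ l : Fin n, (K:ℕ) < (l:ℕ) → N l = 0 := by
    intro l hl
    by_contra h
    have := Supp.le_max' l (by
      simp only [hSupp, Finset.mem_filter, Finset.mem_univ, true_and]; exact h)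
    rw [Fin.le_def] at this
    omega
  have hj0K : (j0:ℕ) ≤ (K:ℕ) := Fin.le_def.mp (Supp.le_max' _ hj0S)
  set k : ℕ := (K : ℕ) with hkdef
  have hkn : k < n := K.isLt
  -- N' = N / x_K is not in S
  set N' : Fin n → ℕ := fun l => if l = K then N K - 1 else N l with hN'def
  have hN'S : N' ∉ S := by
    intro h
    have hle : ∀ l, N' l ≤ N l := by
      intro l
      simp only [hN'def]
      by_cases hl : l = K
      · rw [if_pos hl, hl]; omega
      · rw [if_neg hl]
    have h2 := congrFun (hNmin.2 N' h hle) K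
    simp only [hN'def, if_pos rfl] at h2
    omega
  have hN'lt := lt_fF_of_notMem hIdeal hArt hN'S
  have hMlt := lt_fF_of_notMem hIdeal hArt hM
  have hagree : ∀ l < k, extv N' l = extv N l := by
    intro l hl
    have hln : l < n := by omega
    simp only [extv, dif_pos hln, hN'def]
    rw [if_neg]
    intro h
    have := congrArg Fin.val h
    simp only [Fin.val_mk] at this
    omega
  -- fF at level k on N equals N K
  have hfK : fF S k (extv N) = N K := by
    have h1 : fF S k (extv N) ≤ N K := fF_le_of_mem hNmin.1 K hKz
    have h2 := hN'lt K
    rw [fF_congr S hagree] at h2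
    simp only [hN'def, if_pos rfl] at h2
    omega
  -- M vanishes beyond K
  have hMz : ∀ l : Fin n, k < (l:ℕ) → M l = 0 := by
    intro l hl
    have hKl : K < l := by rw [Fin.lt_def]; omega
    have hjl : j0 < l := by rw [Fin.lt_def]; omega
    rw [← hj0tail l hjl]
    exact hKz l (by omega)
  have hMK : M K ≤ N K := by
    rcases Nat.lt_or_ge (j0:ℕ) k with h|h
    · have := hj0tail K (by rw [Fin.lt_def]; omega)
      omega
    · have : j0 = K := Fin.ext (by omega)
      rw [this] at hj0lt
      omega
  -- degree splits
  have hsN : (∑ j ∈ Finset.range k, extv N j) + N K = mdeg N := by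
    have h1 := mdeg_split hkn N hKz
    have h2 : (⟨k, hkn⟩ : Fin n) = K := Fin.ext rfl
    rw [h2] at h1
    exact (by rw [mdeg, h1] : mdeg N = _).symm
  have hsM : (∑ j ∈ Finset.range k, extv M j) + M K = mdeg M := by
    have h1 := mdeg_split hkn M hMz
    have h2 : (⟨k, hkn⟩ : Fin n) = K := Fin.ext rfl
    rw [h2] at h1
    exact (by rw [mdeg, h1] : mdeg M = _).symm
  rcases Nat.lt_or_ge k 2 with hk2 | hk2
  · -- small cases k = 0, k = 1
    have : k = 0 ∨ k = 1 := by omega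
    rcases this with hk1 | hk1
    · -- k = 0 : impossible
      rw [hk1, Finset.sum_range_zero] at hsN hsM
      have : j0 = K := Fin.ext (by omega)
      rw [this] at hj0lt
      omega
    · -- k = 1 : use strong stability on the first two variables
      have hn2 : 1 < n := by omega
      have h0n : 0 < n := by omega
      have he0N : extv N 0 = N ⟨0, h0n⟩ := dif_pos h0n
      have he0M : extv M 0 = M ⟨0, h0n⟩ := dif_pos h0n
      rw [hk1, Finset.sum_range_one, he0N] at hsN
      rw [hk1, Finset.sum_range_one, he0M] at hsM
      have hgN : fF S 1 (fun _ => N ⟨0, h0n⟩) = N K := by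
        rw [← hfK, hk1]
        apply fF_congr
        intro l hl
        have : l = 0 := by omega
        subst this
        exact he0N.symm
      have hgM : M K < fF S 1 (fun _ => M ⟨0, h0n⟩) := by
        have h1 := hMlt K
        rw [← hkdef, hk1] at h1
        rwa [fF_congr S (β := fun _ => M ⟨0, h0n⟩) (fun l hl => by
          have : l = 0 := by omega
          subst this
          exact he0M)] at h1
      rcases Nat.lt_or_ge (j0:ℕ) k with h|h
      · -- j0 = 0 : impossible by degree count
        have hj00 : j0 = ⟨0, h0n⟩ := Fin.ext (by simp only [Fin.val_mk]; omega)
        have hMKN : M K = N K := by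
          have := hj0tail K (by rw [Fin.lt_def]; omega)
          omega
        rw [hj00] at hj0lt
        omega
      · -- j0 = K
        have hj0Keq : j0 = K := Fin.ext (by omega)
        rw [hj0Keq] at hj0lt
        -- M ⟨0⟩ > N ⟨0⟩
        have hgt : N ⟨0, h0n⟩ < M ⟨0, h0n⟩ := by omega
        set c : ℕ := M ⟨0, h0n⟩ - N ⟨0, h0n⟩ with hc
        have hcc : N ⟨0, h0n⟩ + c = M ⟨0, h0n⟩ := by omega
        have hit := g_iter hIdeal hArt hSS hn2 (N ⟨0, h0n⟩) c
        rw [show (fun _ : ℕ => N ⟨0, h0n⟩ + c) = (fun _ : ℕ => M ⟨0, h0n⟩) from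
          funext fun _ => hcc] at hit
        rcases hit with h'|h' <;> omega
  · -- main case k ≥ 2 : use the strong Stanley hypothesis
    obtain ⟨t, ht⟩ := hSSP k hk2 (by omega)
    have hA := trunc_mem_JSet hIdeal hArt hN'S k (le_of_lt hkn)
    have hB := trunc_mem_JSet hIdeal hArt hM k (le_of_lt hkn)
    have htA := ht _ hA
    have htB := ht _ hB
    have e1 : fF S k (fun l => if l < k then extv N' l else 0) = N K := by
      rw [← hfK]
      exact fF_congr S (fun l hl => by rw [if_pos hl]; exact hagree l hl)
    have e2 : M K < fF S k (fun l => if l < k then extv M l else 0) := by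
      have h1 := hMlt K
      rw [← hkdef] at h1
      rwa [fF_congr S (fun l hl => (if_pos hl).symm)] at h1
    have e3 : asum k (fun l => if l < k then extv N' l else 0) + N K = mdeg N := by
      rw [← hsN]
      congr 1
      refine Finset.sum_congr rfl fun j hj => ?_
      rw [Finset.mem_range] at hj
      show (if j < k then extv N' j else 0) = extv N j
      rw [if_pos hj]
      exact hagree j hj
    have e4 : asum k (fun l => if l < k then extv M l else 0) + M K = mdeg M := by
      rw [← hsM]
      congr 1
      refine Finset.sum_congr rfl fun j hj => ?_
      show (if j < k then extv M j else 0) = extv M j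
      exact if_pos (Finset.mem_range.mp hj)
    rw [e1] at htA
    omega
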